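/- Fix ℓ ≥ 3 and t with 0 ≤ b ≤ ℓ−2 where t = aℓ + b. Define l_t(t+2k) = Σ_{i≥0} (w(t+2iℓ, k−iℓ) − w(t+2iℓ+2(ℓ−1−b), k−iℓ−(ℓ−1−b))), where w(s,m) = C(s+2m,m) − C(s+2m,m−1) (zero when m<0). Then the generating function L_t(x) = Σ_{k≥0} l_t(t+2k) x^k equals (d(x)+1)^{t+1}·(1 − d(x)^{ℓ−1−b})/(1 − d(x)^{ℓ}) in ℚ[[x]], where d(x) = x c(x)² and c(x) is the Catalan series. -/

import Mathlib

open PowerSeries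

/-- The Catalan generating function `c(x)` in `ℚ[[x]]`. -/
noncomputable def catalanSeries : PowerSeries ℚ :=
  PowerSeries.mk fun n => (catalan n : ℚ)

/-- `d(x) = x·c(x)²`. -/
noncomputable def dSeries : PowerSeries ℚ :=
  PowerSeries.X * _root_.catalanSeries ^ 2

/-- The ballot numbers `w(s,m) = C(s+2m,m) − C(s+2m,m−1)`, with `w(s,m) = 0`
for `m < 0`. -/
noncomputable def wZ (s : ℕ) (m : ℤ) : ℚ :=
  if 0 ≤ m then
    (Nat.choose (s + 2 * m.toNat) m.toNat : ℚ) -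
      (if m = 0 then 0 else (Nat.choose (s + 2 * m.toNat) (m.toNat - 1) : ℚ))
  else 0

/-- `l_t(t+2k) = Σ_{i≥0} (w(t+2iℓ, k−iℓ) − w(t+2iℓ+2(ℓ−1−b), k−iℓ−(ℓ−1−b)))`;
all terms with `i > k` vanish (as `ℓ ≥ 1`), so the sum over `i ≤ k` is the full sum. -/
noncomputable def lCoeff (ℓ t b k : ℕ) : ℚ :=
  ∑ i ∈ Finset.range (k + 1),
    (wZ (t + 2 * i * ℓ) ((k : ℤ) - i * ℓ) -
      wZ (t + 2 * i * ℓ + 2 * (ℓ - 1 - b)) ((k : ℤ) - i * ℓ - (ℓ - 1 - b)))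

/-! ### Auxiliary lemmas -/

/-- `w(s,m)` for natural arguments. -/
noncomputable def wNat (s m : ℕ) : ℚ :=
  (Nat.choose (s + 2 * m) m : ℚ) -
    (if m = 0 then 0 else (Nat.choose (s + 2 * m) (m - 1) : ℚ))

lemma catalanSeries_eq : _root_.catalanSeries = 1 + dSeries := by
  ext n
  cases n with
  | zero => simp [_root_.catalanSeries, dSeries]
  | succ n =>
    rw [map_add, dSeries, coeff_succ_X_mul, coeff_one, if_neg (Nat.succ_ne_zero n), zero_add,
      sq, coeff_mul]
    simp only [_root_.catalanSeries, coeff_mk]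
    rw [catalan_succ']
    push_cast
    rfl

lemma wNat_zero (m : ℕ) : wNat 0 m = catalan m := by
  cases m with
  | zero => simp [wNat]
  | succ j =>
    have key : (Nat.choose (2*(j+1)) (j+1) : ℚ) * (j+1) = (Nat.choose (2*(j+1)) j : ℚ) * (j+2) := by
      have h := Nat.choose_succ_right_eq (2*(j+1)) j
      have h2 : 2*(j+1) - j = j + 2 := by omega
      rw [h2] at h
      exact_mod_cast congrArg (Nat.cast (R := ℚ)) h
    have hc : ((j:ℚ)+2) * catalan (j+1) = Nat.choose (2*(j+1)) (j+1) := by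
      have h := succ_mul_catalan_eq_centralBinom (j+1)
      rw [Nat.centralBinom] at h
      have := congrArg (Nat.cast (R := ℚ)) h
      push_cast at this
      linarith [this]
    have hj2 : ((j:ℚ)+2) ≠ 0 := by positivity
    simp only [wNat, Nat.succ_ne_zero, if_false, Nat.zero_add, Nat.add_sub_cancel, zero_add]
    refine mul_left_cancel₀ hj2 ?_
    linear_combination key - hc

lemma wNat_one (m : ℕ) : wNat 1 m = catalan (m+1) := by
  cases m with
  | zero => simp [wNat]
  | succ j =>
    have key : (Nat.choose (2*(j+1)+1) (j+1) : ℚ) * (j+1) = (Nat.choose (2*(j+1)+1) j : ℚ) * (j+3) := by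
      have h := Nat.choose_succ_right_eq (2*(j+1)+1) j
      have h2 : 2*(j+1)+1 - j = j + 3 := by omega
      rw [h2] at h
      exact_mod_cast congrArg (Nat.cast (R := ℚ)) h
    have hc : ((j:ℚ)+3) * catalan (j+2) = 2 * Nat.choose (2*(j+1)+1) (j+1) := by
      have h := succ_mul_catalan_eq_centralBinom (j+2)
      rw [Nat.centralBinom] at h
      have hpas : Nat.choose (2*(j+2)) (j+2) =
          Nat.choose (2*(j+1)+1) (j+1) + Nat.choose (2*(j+1)+1) (j+2) := by
        have h5 : 2*(j+2) = (2*(j+1)+1) + 1 := by ring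
        rw [h5, Nat.choose_succ_succ' (2*(j+1)+1) (j+1)]
      have hsym : Nat.choose (2*(j+1)+1) (j+2) = Nat.choose (2*(j+1)+1) (j+1) :=
        Nat.choose_symm_half (j+1)
      rw [hpas, hsym] at h
      have := congrArg (Nat.cast (R := ℚ)) h
      push_cast at this
      linarith [this]
    have hj3 : ((j:ℚ)+3) ≠ 0 := by positivity
    simp only [wNat, Nat.succ_ne_zero, if_false, Nat.add_sub_cancel]
    have e1 : 1 + 2 * (j+1) = 2*(j+1)+1 := by ring
    rw [e1]
    have e3 : (catalan (j+1+1) : ℚ) = catalan (j+2) := by norm_num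
    rw [e3]
    refine mul_left_cancel₀ hj3 ?_
    linear_combination key - hc

lemma wNat_rec (s m : ℕ) : wNat (s+1) (m+1) = wNat s (m+1) + wNat (s+2) m := by
  cases m with
  | zero =>
    simp only [wNat, Nat.succ_ne_zero, if_false, if_pos rfl]
    norm_num [Nat.choose_one_right]
    ring
  | succ j =>
    simp only [wNat, Nat.succ_ne_zero, if_false, Nat.add_sub_cancel]
    have p1 : Nat.choose (s+1+2*(j+1+1)) (j+1+1) =
        Nat.choose (s+2*(j+1+1)) (j+1) + Nat.choose (s+2*(j+1+1)) (j+1+1) := by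
      have h : s+1+2*(j+1+1) = (s+2*(j+1+1))+1 := by ring
      rw [h, Nat.choose_succ_succ' (s+2*(j+1+1)) (j+1)]
    have p2 : Nat.choose (s+1+2*(j+1+1)) (j+1) =
        Nat.choose (s+2*(j+1+1)) j + Nat.choose (s+2*(j+1+1)) (j+1) := by
      have h : s+1+2*(j+1+1) = (s+2*(j+1+1))+1 := by ring
      rw [h, Nat.choose_succ_succ' (s+2*(j+1+1)) j]
    have h4 : s+2+2*(j+1) = s+2*(j+1+1) := by ring
    rw [p1, p2, h4]
    push_cast
    ring

lemma coeff_catalan_sq (m : ℕ) : (coeff (R := ℚ) m) (_root_.catalanSeries ^ 2) = catalan (m+1) := by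
  have h := congrArg (coeff (m+1)) catalanSeries_eq
  rw [map_add, dSeries, coeff_succ_X_mul, coeff_one, if_neg (Nat.succ_ne_zero m),
    zero_add] at h
  rw [← h]
  simp [_root_.catalanSeries]

lemma wNat_gf : ∀ s : ℕ, PowerSeries.mk (fun m => wNat s m) = _root_.catalanSeries ^ (s+1) := by
  intro s
  induction s using Nat.strong_induction_on with
  | _ s ih =>
    match s with
    | 0 =>
      ext m
      simp [wNat_zero, _root_.catalanSeries]
    | 1 =>
      ext m
      simp [wNat_one, coeff_catalan_sq]
    | (s+2) =>
      have ih1 := ih s (by omega)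
      have ih2 := ih (s+1) (by omega)
      have hc : _root_.catalanSeries ^ (s+2) = _root_.catalanSeries^(s+1) + X * _root_.catalanSeries^(s+3) := by
        have h1 : _root_.catalanSeries ^ (s+2) = _root_.catalanSeries^(s+1) * _root_.catalanSeries := by ring
        rw [h1]
        nth_rewrite 2 [catalanSeries_eq]
        rw [dSeries]
        ring
      ext m
      have h := congrArg (coeff (m+1)) hc
      rw [map_add, coeff_succ_X_mul, ← ih1, ← ih2] at h
      rw [coeff_mk, coeff_mk] at h
      rw [show s+2+1 = s+3 from rfl, coeff_mk]
      have hr := wNat_rec s m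
      linarith [h, hr]

lemma wZ_eq_coeff (s j k : ℕ) :
    wZ s ((k:ℤ) - j) = coeff k (X^j * _root_.catalanSeries^(s+1)) := by
  rw [coeff_X_pow_mul']
  by_cases hjk : j ≤ k
  · rw [if_pos hjk, ← wNat_gf, coeff_mk]
    have h0 : (0:ℤ) ≤ (k:ℤ) - j := by omega
    have ht : ((k:ℤ) - j).toNat = k - j := by omega
    rw [wZ, if_pos h0, ht, wNat]
    by_cases hz : (k:ℤ) - (j:ℤ) = 0
    · have hz' : k - j = 0 := by omega
      rw [if_pos hz, if_pos hz']
    · have hz' : ¬ (k - j = 0) := by omega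
      rw [if_neg hz, if_neg hz']
  · rw [if_neg hjk, wZ, if_neg (by omega)]

lemma wZ_neg (s : ℕ) (m : ℤ) (h : m < 0) : wZ s m = 0 := if_neg (by omega)

lemma coeff_mul_congr {f g h : PowerSeries ℚ} {k : ℕ}
    (H : ∀ j ≤ k, coeff j f = coeff j g) :
    coeff k (f * h) = coeff k (g * h) := by
  rw [coeff_mul, coeff_mul]
  refine Finset.sum_congr rfl fun p hp => ?_
  rw [Finset.HasAntidiagonal.mem_antidiagonal] at hp
  rw [H p.1 (by omega)]

lemma d_pow_mul (n m : ℕ) :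
    dSeries ^ n * _root_.catalanSeries ^ m = X ^ n * _root_.catalanSeries ^ (2*n+m) := by
  rw [dSeries, mul_pow, ← pow_mul, pow_add]
  ring

theorem stmt_10 (ℓ a b : ℕ) (hℓ : 3 ≤ ℓ) (hb : b ≤ ℓ - 2) :
    PowerSeries.mk (fun k => lCoeff ℓ (a * ℓ + b) b k) =
      (dSeries + 1) ^ (a * ℓ + b + 1) * (1 - dSeries ^ (ℓ - 1 - b)) *
        (1 - dSeries ^ ℓ)⁻¹ := by
  set t := a * ℓ + b with hT
  set r := ℓ - 1 - b with hR
  have hr1 : 1 ≤ r := by omega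
  have hℓpos : 0 < ℓ := by omega
  have hrz : ((ℓ:ℤ) - 1 - (b:ℤ)) = (r:ℤ) := by omega
  have hd1 : dSeries + 1 = _root_.catalanSeries := by rw [catalanSeries_eq]; ring
  have hu : constantCoeff (1 - dSeries ^ ℓ) ≠ 0 := by
    have hd0 : constantCoeff dSeries = 0 := by simp [dSeries]
    simp [map_sub, map_pow, hd0, zero_pow (by omega : ℓ ≠ 0)]
  rw [hd1]
  have key : (PowerSeries.mk fun k => lCoeff ℓ t b k) * (1 - dSeries^ℓ)
      = _root_.catalanSeries^(t+1) * (1 - dSeries^r) := by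
    ext k
    set S : PowerSeries ℚ := ∑ i ∈ Finset.range (k+1),
      (X^(i*ℓ) * _root_.catalanSeries^((t+2*i*ℓ)+1)
        - X^(i*ℓ+r) * _root_.catalanSeries^((t+2*i*ℓ+2*r)+1)) with hS
    have hagree : ∀ j, j ≤ k →
        coeff j (PowerSeries.mk fun k => lCoeff ℓ t b k) = coeff j S := by
      intro j hj
      rw [coeff_mk, hS, map_sum, lCoeff]
      rw [← Finset.sum_subset (Finset.range_subset_range.mpr (by omega : j+1 ≤ k+1))]
      · refine Finset.sum_congr rfl fun i _ => ?_
        rw [map_sub, ← wZ_eq_coeff, ← wZ_eq_coeff]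
        have harg1 : ((j:ℤ) - (i*ℓ : ℕ)) = ((j:ℤ) - (i:ℤ)*(ℓ:ℤ)) := by push_cast; ring
        have harg2 : ((j:ℤ) - ((i*ℓ+r : ℕ)):ℤ) = ((j:ℤ) - (i:ℤ)*(ℓ:ℤ) - ((ℓ:ℤ)-1-(b:ℤ))) := by
          push_cast
          linarith [hrz]
        rw [harg1, harg2, ← hR]
      · intro i hik hij
        have hi1 : j + 1 ≤ i := by
          simp only [Finset.mem_range] at hij
          omega
        have hil : j < i * ℓ := lt_of_lt_of_le (by omega) (Nat.le_mul_of_pos_right i hℓpos)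
        have hil1 : ((j:ℤ)) < ((i*ℓ : ℕ) : ℤ) := by exact_mod_cast hil
        have hil2 : ((j:ℤ)) < ((i*ℓ+r : ℕ) : ℤ) := by
          exact_mod_cast Nat.lt_of_lt_of_le hil (Nat.le_add_right _ _)
        rw [map_sub, ← wZ_eq_coeff, ← wZ_eq_coeff,
          wZ_neg _ _ (by linarith), wZ_neg _ _ (by linarith), sub_zero]
    have step1 : coeff k ((PowerSeries.mk fun k => lCoeff ℓ t b k) * (1 - dSeries^ℓ))
        = coeff k (S * (1 - dSeries^ℓ)) := coeff_mul_congr hagree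
    have hSd : S = _root_.catalanSeries^(t+1) * (1 - dSeries^r)
        * (∑ i ∈ Finset.range (k+1), (dSeries^ℓ)^i) := by
      rw [hS, Finset.mul_sum]
      refine Finset.sum_congr rfl fun i _ => ?_
      have e1 : X^(i*ℓ) * _root_.catalanSeries^((t+2*i*ℓ)+1)
          = dSeries^(i*ℓ) * _root_.catalanSeries^(t+1) := by
        rw [d_pow_mul]
        congr 2
        ring
      have e2 : X^(i*ℓ+r) * _root_.catalanSeries^((t+2*i*ℓ+2*r)+1)
          = dSeries^(i*ℓ+r) * _root_.catalanSeries^(t+1) := by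
        rw [d_pow_mul]
        congr 2
        ring
      rw [e1, e2, ← pow_mul, mul_comm ℓ i, pow_add]
      ring
    have step2 : S * (1 - dSeries^ℓ)
        = _root_.catalanSeries^(t+1) * (1 - dSeries^r) * (1 - (dSeries^ℓ)^(k+1)) := by
      rw [hSd, mul_assoc]
      congr 1
      have hgeo := geom_sum_mul (dSeries^ℓ) (k+1)
      linear_combination -hgeo
    have step3 : coeff k (_root_.catalanSeries^(t+1) * (1 - dSeries^r) * (1 - (dSeries^ℓ)^(k+1)))
        = coeff k (_root_.catalanSeries^(t+1) * (1 - dSeries^r)) := by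
      rw [mul_one_sub, map_sub]
      have hx : _root_.catalanSeries^(t+1) * (1 - dSeries^r) * (dSeries^ℓ)^(k+1)
          = X^(ℓ*(k+1)) * ((_root_.catalanSeries^2)^(ℓ*(k+1))
            * (_root_.catalanSeries^(t+1) * (1 - dSeries^r))) := by
        rw [← pow_mul, dSeries, mul_pow, ← pow_mul]
        ring
      rw [hx, coeff_X_pow_mul', if_neg (by
        have := Nat.le_mul_of_pos_left (k+1) hℓpos
        omega), sub_zero]
    rw [step1, step2, step3]
  calc (PowerSeries.mk fun k => lCoeff ℓ t b k)
      = (PowerSeries.mk fun k => lCoeff ℓ t b k)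
          * ((1 - dSeries^ℓ) * (1 - dSeries^ℓ)⁻¹) := by
        rw [PowerSeries.mul_inv_cancel _ hu, mul_one]
    _ = ((PowerSeries.mk fun k => lCoeff ℓ t b k) * (1 - dSeries^ℓ)) * (1 - dSeries^ℓ)⁻¹ := by
        ring
    _ = _root_.catalanSeries^(t+1) * (1 - dSeries^r) * (1 - dSeries^ℓ)⁻¹ := by rw [key]
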